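/- Let λ be a partition of n with conjugate λ', and let α be a set partition of {1,...,n} of type λ'. Then the subspace H_T = Σ_{τ∈T} V_λ^τ of V_λ is independent of the choice of the collection T of transpositions generating the Young subgroup S_α. -/

import Mathlib

noncomputable section
open scoped Classical

/-- The Young subgroup of a set partition (modeled as a setoid on `Fin n`):
permutations preserving each block. -/
def youngSubgroup {n : ℕ} (s : Setoid (Fin n)) : Subgroup (Equiv.Perm (Fin n)) where
  carrier := {σ | ∀ x, s.r (σ x) x}
  one_mem' := fun x => s.iseqv.refl x
  mul_mem' := by
    intro a b ha hb x
    exact s.iseqv.trans (ha (b x)) (hb x)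
  inv_mem' := by
    intro a ha x
    have h := ha (a⁻¹ x)
    simp only [Equiv.Perm.coe_inv, Equiv.apply_symm_apply] at h
    exact s.iseqv.symm h

/-- The block of `x` in the set partition `s`. -/
def block {n : ℕ} (s : Setoid (Fin n)) (x : Fin n) : Finset (Fin n) :=
  Finset.univ.filter (fun y => s.r x y)

/-- The multiset of block sizes (the "type") of a set partition of `{1,…,n}`. -/
def blockSizes {n : ℕ} (s : Setoid (Fin n)) : Multiset ℕ :=
  (Finset.univ.image (fun x => block s x)).val.map Finset.card

/-- The Young diagram of an integer partition. -/
def diagramOf {n : ℕ} (lam : n.Partition) : YoungDiagram :=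
  YoungDiagram.ofRowLens (lam.parts.sort (· ≥ ·)) (List.Pairwise.sortedGE (lam.parts.pairwise_sort _))

/-- The multiset of parts of the conjugate (transposed) partition. -/
def conjParts {n : ℕ} (lam : n.Partition) : Multiset ℕ :=
  ((diagramOf lam).transpose.rowLens : List ℕ)

/-- The multiset of entries of a semistandard Young tableau. -/
def contentOf {γ : YoungDiagram} (T : SemistandardYoungTableau γ) : Multiset ℕ :=
  γ.cells.val.map (fun c => T c.1 c.2)

/-- The multiset of entries prescribed by a content `μ`: `μᵢ` copies of `i`
(entries are numbered from `0`, parts of `μ` taken in decreasing order). -/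
def muContent (μ : Multiset ℕ) : Multiset ℕ :=
  ↑(((μ.sort (· ≥ ·)).zipIdx.map (fun p => List.replicate p.1 p.2)).flatten)

/-- The Kostka number: the number of semistandard Young tableaux of shape `γ`
and content `μ`. -/
def kostka (γ : YoungDiagram) (μ : Multiset ℕ) : ℕ :=
  Nat.card {T : SemistandardYoungTableau γ // contentOf T = muContent μ}

/-- The subspace of vectors fixed by every element of `S`. -/
def fixedBy {G V : Type*} [Group G] [AddCommGroup V] [Module ℂ V]
    (ρ : Representation ℂ G V) (S : Set G) : Submodule ℂ V where
  carrier := {v | ∀ g ∈ S, ρ g v = v}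
  add_mem' := by
    intro a b ha hb g hg
    simp [map_add, ha g hg, hb g hg]
  zero_mem' := by intro g hg; simp
  smul_mem' := by
    intro c v hv g hg
    simp [hv g hg]

/-- The subspace of vectors on which each element of `S` acts as its sign. -/
def signEigen {n : ℕ} {V : Type*} [AddCommGroup V] [Module ℂ V]
    (ρ : Representation ℂ (Equiv.Perm (Fin n)) V) (S : Set (Equiv.Perm (Fin n))) :
    Submodule ℂ V where
  carrier := {v | ∀ g ∈ S, ρ g v = ((Equiv.Perm.sign g : ℤ) : ℂ) • v}
  add_mem' := by
    intro a b ha hb g hg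
    simp [map_add, ha g hg, hb g hg, smul_add]
  zero_mem' := by intro g hg; simp
  smul_mem' := by
    intro c v hv g hg
    rw [LinearMap.map_smul, hv g hg, smul_comm]

/-- Irreducibility of a representation: the space is nonzero and the only
invariant subspaces are `⊥` and `⊤`. -/
def IsIrrep {G V : Type*} [Group G] [AddCommGroup V] [Module ℂ V]
    (ρ : Representation ℂ G V) : Prop :=
  (∃ v : V, v ≠ 0) ∧
    ∀ U : Submodule ℂ V, (∀ g v, v ∈ U → ρ g v ∈ U) → U = ⊥ ∨ U = ⊤

/-- `ρ` is (a copy of) the irreducible representation `π_λ` of the symmetric group: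
it is irreducible, has a nonzero invariant vector for a Young subgroup of type `λ`,
and a nonzero sign-vector for a Young subgroup of type `λ'`
(the Frobenius–Young characterization). -/
def IsSpechtOfShape {V : Type*} [AddCommGroup V] [Module ℂ V] (n : ℕ) (lam : n.Partition)
    (ρ : Representation ℂ (Equiv.Perm (Fin n)) V) : Prop :=
  IsIrrep ρ ∧
    (∃ s : Setoid (Fin n), blockSizes s = lam.parts ∧
      fixedBy ρ (youngSubgroup s : Set (Equiv.Perm (Fin n))) ≠ ⊥) ∧
    (∃ s : Setoid (Fin n), blockSizes s = conjParts lam ∧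
      signEigen ρ (youngSubgroup s : Set (Equiv.Perm (Fin n))) ≠ ⊥)

/-- Auxiliary: membership in the dual annihilator of `⨆ τ ∈ T, fixedBy ρ {τ}`
is equivalent to transforming by the sign under every element of `closure T`. -/
theorem mem_ann_iff_aux
    {n : ℕ} {V : Type*} [AddCommGroup V] [Module ℂ V]
    (ρ : Representation ℂ (Equiv.Perm (Fin n)) V)
    (T : Set (Equiv.Perm (Fin n))) (hT : ∀ τ ∈ T, Equiv.Perm.IsSwap τ)
    (φ : Module.Dual ℂ V) :
    φ ∈ Submodule.dualAnnihilator (⨆ τ ∈ T, fixedBy ρ {τ} : Submodule ℂ V) ↔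
      ∀ g ∈ Subgroup.closure T, ∀ v,
        φ (ρ g v) = ((Equiv.Perm.sign g : ℤ) : ℂ) * φ v := by
  have hmem : ∀ τ w, w ∈ fixedBy ρ ({τ} : Set (Equiv.Perm (Fin n))) ↔ ρ τ w = w := by
    intro τ w
    constructor
    · intro h; exact h τ rfl
    · intro h g hg; rw [Set.mem_singleton_iff] at hg; rw [hg]; exact h
  have hsq : ∀ τ ∈ T, ∀ v : V, ρ τ (ρ τ v) = v := by
    intro τ hτ v
    obtain ⟨a, b, hab, rfl⟩ := hT τ hτ
    rw [← Module.End.mul_apply, ← map_mul, Equiv.swap_mul_self, map_one, Module.End.one_apply]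
  rw [Submodule.mem_dualAnnihilator]
  constructor
  · intro h g hg
    induction hg using Subgroup.closure_induction with
    | mem τ hτ =>
      intro v
      have hfix : v + ρ τ v ∈ (⨆ τ ∈ T, fixedBy ρ {τ} : Submodule ℂ V) := by
        refine Submodule.mem_iSup_of_mem τ (Submodule.mem_iSup_of_mem hτ ?_)
        rw [hmem]
        rw [map_add, hsq τ hτ, add_comm]
      have h0 := h _ hfix
      obtain ⟨a, b, hab, rfl⟩ := hT τ hτ
      rw [Equiv.Perm.sign_swap hab]
      push_cast
      rw [map_add] at h0
      linear_combination h0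
    | one => intro v; simp
    | mul a b _ _ ha hb =>
      intro v
      have : ρ (a * b) v = ρ a (ρ b v) := by
        rw [map_mul, Module.End.mul_apply]
      rw [this, ha (ρ b v), hb v, map_mul]
      push_cast
      ring
    | inv g _ hg =>
      intro v
      have hc : ((Equiv.Perm.sign g : ℤ) : ℂ) * ((Equiv.Perm.sign g : ℤ) : ℂ) = 1 := by
        rcases Int.units_eq_one_or (Equiv.Perm.sign g) with h1 | h1 <;> rw [h1] <;> norm_num
      have key := hg (ρ g⁻¹ v)
      have : ρ g (ρ g⁻¹ v) = v := by
        rw [← Module.End.mul_apply, ← map_mul, mul_inv_cancel, map_one, Module.End.one_apply]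
      rw [this] at key
      rw [Equiv.Perm.sign_inv]
      rw [key]
      rw [← mul_assoc, hc, one_mul]
  · intro h w hw
    refine Submodule.iSup_induction _ (motive := fun w => φ w = 0) hw ?_ (by simp) ?_
    · intro τ w hw
      rcases Classical.em (τ ∈ T) with hτ | hτ
      · have hw' : w ∈ fixedBy ρ ({τ} : Set (Equiv.Perm (Fin n))) := by
          simp only [hτ, iSup_pos] at hw; exact hw
        have h1 := h τ (Subgroup.subset_closure hτ) w
        rw [(hmem τ w).mp hw'] at h1
        obtain ⟨a, b, hab, rfl⟩ := hT τ hτ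
        rw [Equiv.Perm.sign_swap hab] at h1
        push_cast at h1
        linear_combination h1 / 2
      · have hb : (⨆ _ : τ ∈ T, fixedBy ρ {τ} : Submodule ℂ V) = ⊥ := by simp [hτ]
        rw [hb, Submodule.mem_bot] at hw
        rw [hw, map_zero]
    · intro x y hx hy
      rw [map_add, hx, hy, add_zero]
/-- the subspace `H_T = Σ_{τ∈T} V_λ^τ` does not depend on the choice
of the collection `T` of transpositions generating the Young subgroup `S_s` of a
set partition `s` of type `λ'`. -/
theorem sup_fixed_independent_of_generating_transpositions
    {n : ℕ} {V : Type*} [AddCommGroup V] [Module ℂ V] [FiniteDimensional ℂ V]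
    (lam : n.Partition) (ρ : Representation ℂ (Equiv.Perm (Fin n)) V)
    (hρ : IsSpechtOfShape n lam ρ)
    (s : Setoid (Fin n)) (hs : blockSizes s = conjParts lam)
    (T₁ T₂ : Set (Equiv.Perm (Fin n)))
    (hT₁ : ∀ τ ∈ T₁, Equiv.Perm.IsSwap τ) (hT₂ : ∀ τ ∈ T₂, Equiv.Perm.IsSwap τ)
    (hgen₁ : Subgroup.closure T₁ = youngSubgroup s)
    (hgen₂ : Subgroup.closure T₂ = youngSubgroup s) :
    (⨆ τ ∈ T₁, fixedBy ρ {τ} : Submodule ℂ V) = ⨆ τ ∈ T₂, fixedBy ρ {τ} := by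
  rw [← Subspace.dualAnnihilator_inj]
  ext φ
  rw [mem_ann_iff_aux ρ T₁ hT₁, mem_ann_iff_aux ρ T₂ hT₂, hgen₁, hgen₂]
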